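/- Fix positive integers n, l, j, k with 2l ≤ n, 1 ≤ j ≤ l, and 0 ≤ k ≤ l − 1. Then ∑_{t=0}^{l−k} (−1)^t (((l−t−k)(n+1) − l(l+1))/(t+k+1)) C(l−k, t) = ((n−l+1)(l+1)/(k+1)) · C(l+1, k+1)^{-1}, which is positive. -/

import Mathlib

open Finset Nat

lemma key_sum : ∀ (m k : ℕ), ∑ t ∈ Finset.range (m+1),
    (-1:ℝ)^t * (m.choose t) / ((t:ℝ) + k + 1)
    = (m ! : ℝ) * (k ! : ℝ) / ((m + k + 1)! : ℝ) := by
  intro m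
  induction m with
  | zero =>
    intro k
    have hf : ((k ! : ℕ):ℝ) ≠ 0 := by positivity
    simp only [Finset.sum_range_one, pow_zero, Nat.choose_self, Nat.cast_one, one_mul,
      Nat.cast_zero, zero_add, Nat.zero_add, Nat.factorial]
    push_cast [Nat.factorial_succ]
    field_simp
  | succ m ih =>
    intro k
    have h1 := ih k
    have h2 := ih (k+1)
    rw [Finset.sum_range_succ'] at *
    have hsplit : ∀ i ∈ Finset.range (m+1),
        (-1:ℝ)^(i+1) * ((m+1).choose (i+1)) / ((i+1:ℕ) + k + 1)
        = (-1:ℝ)^(i+1) * (m.choose i) / ((i:ℝ) + (k+1) + 1)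
          + (-1:ℝ)^(i+1) * (m.choose (i+1)) / ((i+1:ℕ) + k + 1) := by
      intro i _
      rw [Nat.choose_succ_succ]
      push_cast
      have : (i:ℝ) + 1 + k + 1 ≠ 0 := by positivity
      field_simp
      ring
    rw [Finset.sum_congr rfl hsplit, Finset.sum_add_distrib]
    have hA : ∑ i ∈ Finset.range (m+1),
        (-1:ℝ)^(i+1) * (m.choose i) / ((i:ℝ) + (k+1) + 1)
        = - ∑ i ∈ Finset.range (m+1), (-1:ℝ)^i * (m.choose i) / ((i:ℝ) + (k+1) + 1) := by
      rw [← Finset.sum_neg_distrib]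
      apply Finset.sum_congr rfl
      intro i _
      ring
    have hfull : ∑ i ∈ Finset.range (m+1), (-1:ℝ)^i * (m.choose i) / ((i:ℝ) + (k+1) + 1)
        = (m ! : ℝ) * ((k+1) ! : ℝ) / ((m + (k+1) + 1)! : ℝ) := by
      rw [Finset.sum_range_succ']; exact_mod_cast h2
    have hB : ∑ i ∈ Finset.range (m+1),
        (-1:ℝ)^(i+1) * (m.choose (i+1)) / ((i+1:ℕ) + k + 1)
        = ∑ i ∈ Finset.range m, (-1:ℝ)^(i+1) * (m.choose (i+1)) / ((i+1:ℕ) + k + 1) := by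
      rw [Finset.sum_range_succ]
      simp [Nat.choose_succ_self]
    rw [hA, hfull, hB]
    have hS : ∑ i ∈ Finset.range m, (-1:ℝ)^(i+1) * (m.choose (i+1)) / ((i+1:ℕ) + k + 1)
        + (-1:ℝ)^0 * ((m+1).choose 0) / ((0:ℕ) + (k:ℝ) + 1)
        = (m ! : ℝ) * (k ! : ℝ) / ((m + k + 1)! : ℝ) := by
      rw [← h1]
      simp
    -- combine
    have hkpos : (0:ℝ) < (k:ℝ) + 1 := by positivity
    have e1 : (-1:ℝ)^0 * ((m+1).choose 0) / ((0:ℕ) + (k:ℝ) + 1)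
        = (-1:ℝ)^0 * ((m).choose 0) / ((0:ℕ) + (k:ℝ) + 1) := by simp
    rw [e1] at *
    have := hS
    -- S(m+1,k) = S(m,k) - S(m,k+1)
    have goal : - ((m ! : ℝ) * ((k+1) ! : ℝ) / ((m + (k+1) + 1)! : ℝ))
        + (m ! : ℝ) * (k ! : ℝ) / ((m + k + 1)! : ℝ)
        = ((m+1) ! : ℝ) * (k ! : ℝ) / (((m+1) + k + 1)! : ℝ) := by
      have h3 : (m + (k+1) + 1) = (m + k + 1) + 1 := by ring
      have h4 : ((m+1) + k + 1) = (m + k + 1) + 1 := by ring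
      rw [h3, h4]
      have hf : ((m + k + 1)! : ℝ) ≠ 0 := by positivity
      push_cast [Nat.factorial_succ]
      field_simp
      ring
    linarith [hS, goal]

theorem inner_sum_positive (n l j k : ℕ) (hn : 0 < n) (hl : 0 < l) (h2l : 2 * l ≤ n)
    (hj1 : 1 ≤ j) (hjl : j ≤ l) (hk : k ≤ l - 1) :
    ∑ t ∈ Finset.range (l - k + 1),
        (-1 : ℝ) ^ t * ((((l : ℝ) - t - k) * (n + 1) - l * (l + 1)) / ((t : ℝ) + k + 1)) *
          ((l - k).choose t) =
      ((n : ℝ) - l + 1) * (l + 1) / (k + 1) * (((l + 1).choose (k + 1) : ℝ))⁻¹ ∧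
    0 < ((n : ℝ) - l + 1) * (l + 1) / (k + 1) * (((l + 1).choose (k + 1) : ℝ))⁻¹ := by
  have hkl : k + 1 ≤ l := Nat.add_le_of_le_sub hl hk
  set m := l - k with hm
  have hmk : m + k = l := Nat.sub_add_cancel (le_trans (Nat.le_succ k) hkl)
  have hm1 : 1 ≤ m := by omega
  have hln : (l:ℝ) ≤ n := by
    have : l ≤ n := by omega
    exact_mod_cast this
  constructor
  · -- rewrite terms
    have hstep : ∀ t ∈ Finset.range (m+1),
        (-1 : ℝ) ^ t * ((((l : ℝ) - t - k) * (n + 1) - l * (l + 1)) / ((t : ℝ) + k + 1)) *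
          (m.choose t)
        = ((l:ℝ)+1) * ((n:ℝ)+1-l) * ((-1:ℝ)^t * (m.choose t) / ((t:ℝ) + k + 1))
          - ((n:ℝ)+1) * ((-1:ℝ)^t * (m.choose t)) := by
      intro t _
      have hd : ((t:ℝ) + k + 1) ≠ 0 := by positivity
      field_simp
      ring
    rw [Finset.sum_congr rfl hstep, Finset.sum_sub_distrib, ← Finset.mul_sum, ← Finset.mul_sum]
    have halt : ∑ t ∈ Finset.range (m+1), (-1:ℝ)^t * (m.choose t) = 0 := by
      have hm0 : m ≠ 0 := by omega
      have := Int.alternating_sum_range_choose_of_ne hm0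
      have := congrArg (fun z : ℤ => (z : ℝ)) this
      push_cast at this
      simpa using this
    rw [halt, key_sum m k, mul_zero, sub_zero]
    -- now pure factorial identity
    have hml : m + k + 1 = l + 1 := by omega
    rw [hml]
    have hch : ((l+1).choose (k+1) : ℝ) = ((l+1)! : ℝ) / (((k+1)! : ℝ) * ((l - k)! : ℝ)) := by
      have h := Nat.choose_mul_factorial_mul_factorial (by omega : k + 1 ≤ l + 1)
      have h2 : l + 1 - (k + 1) = l - k := by omega
      rw [h2] at h
      have := congrArg (fun z : ℕ => (z : ℝ)) h
      push_cast at this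
      have hne : ((k+1)! : ℝ) * ((l-k)! : ℝ) ≠ 0 := by positivity
      field_simp
      linarith [this]
    rw [hch]
    have hfl : ((l+1)! : ℝ) ≠ 0 := by positivity
    have hfk : ((k:ℕ)! : ℝ) ≠ 0 := by positivity
    have hfm : ((m:ℕ)! : ℝ) ≠ 0 := by positivity
    rw [hm]
    have hfact : ((k+1)! : ℝ) = ((k:ℝ)+1) * (k ! : ℝ) := by
      rw [Nat.factorial_succ]; push_cast; ring
    field_simp [hfact]
    rw [hfact]
    ring
  · have h1 : (0:ℝ) < ((n : ℝ) - l + 1) := by linarith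
    have h2 : (0:ℝ) < ((l+1).choose (k+1) : ℝ) := by
      have : 0 < (l+1).choose (k+1) := Nat.choose_pos (by omega)
      exact_mod_cast this
    have h3 : (0:ℝ) < (((l+1).choose (k+1) : ℝ))⁻¹ := inv_pos.mpr h2
    have h4 : (0:ℝ) < ((n : ℝ) - l + 1) * (l + 1) / (k + 1) :=
      div_pos (mul_pos h1 (by positivity)) (by positivity)
    exact mul_pos h4 h3
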